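/- Let {x_k}, {B_k}, {d_k} be the sequences generated by the Simplex Frank-Wolfe algorithm over the unit simplex S_n with an L-smooth, μ-strongly convex objective f and step size δ_k = μ/(2Ln²). Then for all k ≥ 0, f(x_k) − f* ≤ f(x_k) − B_k ≤ (μ d₀²/2)·exp(−μ k/(4Ln²)), where f* is the optimal value and d₀ = √(2(f(x₀) − B₀)/μ) with B₀ ≤ f* an initial lower bound. -/

import Mathlib

open InnerProductSpace Finset

noncomputable section

abbrev Euc (n : ℕ) := EuclideanSpace ℝ (Fin n)

/-- The all-ones vector. -/
def ones (n : ℕ) : Euc n := WithLp.toLp 2 (fun _ => (1 : ℝ))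

/-- The unit simplex. -/
def unitSimplex (n : ℕ) : Set (Euc n) := {x | (∀ i, 0 ≤ x i) ∧ ∑ i, x i = 1}

/-- The simplex ball. -/
def simplexBall (n : ℕ) (x : Euc n) (d : ℝ) : Set (Euc n) :=
  {y | ∃ l ∈ unitSimplex n, y = (x - d • ones n) + ((n : ℝ) * d) • l}

lemma simplex_comb {n : ℕ} {a b : Euc n} {t : ℝ} (ht0 : 0 ≤ t) (ht1 : t ≤ 1)
    (ha : a ∈ unitSimplex n) (hb : b ∈ unitSimplex n) :
    (1 - t) • a + t • b ∈ unitSimplex n := by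
  obtain ⟨ha1, ha2⟩ := ha
  obtain ⟨hb1, hb2⟩ := hb
  constructor
  · intro i
    simp only [PiLp.add_apply, PiLp.smul_apply, smul_eq_mul]
    have := ha1 i; have := hb1 i
    nlinarith
  · simp only [PiLp.add_apply, PiLp.smul_apply, smul_eq_mul]
    rw [Finset.sum_add_distrib, ← Finset.mul_sum, ← Finset.mul_sum, ha2, hb2]
    ring

lemma abs_coord_le_norm {n : ℕ} (v : Euc n) (i : Fin n) : |v i| ≤ ‖v‖ := by
  rw [EuclideanSpace.norm_eq]
  have h1 : |v i|^2 ≤ ∑ j, ‖v j‖^2 := by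
    have := Finset.single_le_sum (f := fun j => ‖v j‖^2) (fun j _ => by positivity)
      (Finset.mem_univ i)
    simpa [Real.norm_eq_abs] using this
  have := Real.sqrt_le_sqrt h1
  rwa [Real.sqrt_sq_eq_abs, abs_abs] at this

lemma mem_simplexBall {n : ℕ} (hn : 0 < n) {x z : Euc n} (hx : x ∈ unitSimplex n)
    (hz : z ∈ unitSimplex n) {d : ℝ} (hd : 0 ≤ d) (h : ∀ i, x i - d ≤ z i) :
    z ∈ simplexBall n x d := by
  have hnR : (0:ℝ) < n := by exact_mod_cast hn
  rcases eq_or_lt_of_le hd with hd0 | hdpos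
  · have hzx : z = x := by
      have hsum : ∑ i, (z i - x i) = 0 := by
        rw [Finset.sum_sub_distrib, hz.2, hx.2]; ring
      have hnn : ∀ i ∈ Finset.univ, 0 ≤ z i - x i := by
        intro i _; have := h i; rw [← hd0] at this; linarith
      have := (Finset.sum_eq_zero_iff_of_nonneg hnn).mp hsum
      ext i
      have := this i (Finset.mem_univ i)
      linarith
    refine ⟨WithLp.toLp 2 (fun _ => (1:ℝ)/n), ⟨fun i => by rw [PiLp.toLp_apply]; positivity, by
      simp [Finset.sum_const, Finset.card_univ]
      field_simp⟩, ?_⟩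
    ext i
    simp only [PiLp.add_apply, PiLp.sub_apply, PiLp.smul_apply, smul_eq_mul, ones, hzx, PiLp.toLp_apply]
    rw [← hd0]; ring
  · refine ⟨WithLp.toLp 2 (fun i => (z i - x i + d) / (n * d)), ⟨fun i => by
      have := h i
      have : 0 ≤ z i - x i + d := by linarith
      rw [PiLp.toLp_apply]
      positivity, ?_⟩, ?_⟩
    · simp only [PiLp.toLp_apply]
      rw [← Finset.sum_div]
      rw [Finset.sum_add_distrib, Finset.sum_sub_distrib, hz.2, hx.2]
      simp [Finset.sum_const, Finset.card_univ]
      exact ⟨by omega, hdpos.ne'⟩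
    · ext i
      simp only [PiLp.add_apply, PiLp.sub_apply, PiLp.smul_apply, smul_eq_mul, ones, PiLp.toLp_apply]
      field_simp
      ring

lemma ball_norm_bound {n : ℕ} (hn : 0 < n) {x yy : Euc n} {d : ℝ}
    (h : yy ∈ simplexBall n x d) : ‖x - yy‖^2 ≤ (n:ℝ)^2 * d^2 := by
  obtain ⟨l, ⟨hl1, hl2⟩, rfl⟩ := h
  have hnorm : ‖x - ((x - d • ones n) + ((n:ℝ) * d) • l)‖^2
      = ∑ i, (d - (n:ℝ) * d * l i)^2 := by
    rw [EuclideanSpace.norm_eq, Real.sq_sqrt (by positivity)]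
    congr 1; funext i
    simp only [PiLp.sub_apply, PiLp.add_apply, PiLp.smul_apply, smul_eq_mul, ones,
      Real.norm_eq_abs, sq_abs, PiLp.toLp_apply]
    ring_nf
  rw [hnorm]
  have hli : ∀ i, l i ≤ 1 := by
    intro i
    calc l i ≤ ∑ j, l j := Finset.single_le_sum (fun j _ => hl1 j) (Finset.mem_univ i)
    _ = 1 := hl2
  have hsq : ∑ i, (l i)^2 ≤ 1 := by
    calc ∑ i, (l i)^2 ≤ ∑ i, l i := Finset.sum_le_sum (fun i _ => by nlinarith [hl1 i, hli i])
    _ = 1 := hl2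
  have expand : ∑ i, (d - (n:ℝ) * d * l i)^2
      = (n:ℝ) * d^2 - 2 * (n:ℝ) * d^2 + (n:ℝ)^2 * d^2 * ∑ i, (l i)^2 := by
    have : ∀ i, (d - (n:ℝ) * d * l i)^2
        = d^2 - 2 * (n:ℝ) * d^2 * l i + (n:ℝ)^2 * d^2 * (l i)^2 := fun i => by ring
    rw [Finset.sum_congr rfl (fun i _ => this i)]
    rw [Finset.sum_add_distrib, Finset.sum_sub_distrib, ← Finset.mul_sum, ← Finset.mul_sum, hl2]
    simp [Finset.sum_const, Finset.card_univ]
  rw [expand]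
  have hnR : (1:ℝ) ≤ n := by exact_mod_cast hn
  have h1 : (n:ℝ)^2 * d^2 * ∑ i, (l i)^2 ≤ (n:ℝ)^2 * d^2 * 1 :=
    mul_le_mul_of_nonneg_left hsq (by positivity)
  nlinarith [sq_nonneg d, mul_nonneg (le_trans zero_le_one hnR) (sq_nonneg d)]

lemma first_order_opt {n : ℕ} {f : Euc n → ℝ} {g : Euc n} {L : ℝ} (hL : 0 < L)
    {xstar : Euc n} (hxs : xstar ∈ unitSimplex n)
    (hsm : ∀ b ∈ unitSimplex n, f b ≤ f xstar + ⟪g, b - xstar⟫_ℝ + L / 2 * ‖xstar - b‖ ^ 2)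
    (hmin : ∀ z ∈ unitSimplex n, f xstar ≤ f z)
    {z : Euc n} (hz : z ∈ unitSimplex n) : 0 ≤ ⟪g, z - xstar⟫_ℝ := by
  set c := ⟪g, z - xstar⟫_ℝ with hc
  set M := L / 2 * ‖z - xstar‖ ^ 2 with hM
  have hMnn : 0 ≤ M := by positivity
  have key : ∀ t : ℝ, 0 < t → t ≤ 1 → 0 ≤ c + t * M := by
    intro t ht0 ht1
    have hw : (1 - t) • xstar + t • z ∈ unitSimplex n := simplex_comb (le_of_lt ht0) ht1 hxs hz
    set w := (1 - t) • xstar + t • z with hwdef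
    have hws : w - xstar = t • (z - xstar) := by
      rw [hwdef]; module
    have hinner : ⟪g, w - xstar⟫_ℝ = t * c := by
      rw [hws, real_inner_smul_right]
    have hnorm : ‖xstar - w‖ ^ 2 = t ^ 2 * ‖z - xstar‖ ^ 2 := by
      have : xstar - w = -(t • (z - xstar)) := by rw [← hws]; abel
      rw [this, norm_neg, norm_smul, Real.norm_eq_abs, mul_pow, sq_abs]
    have h1 := hsm w hw
    have h2 := hmin w hw
    rw [hinner, hnorm] at h1
    have h3 : 0 ≤ t * c + L / 2 * (t ^ 2 * ‖z - xstar‖ ^ 2) := by linarith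
    have h4 : 0 ≤ t * (c + t * M) := by rw [hM]; nlinarith
    nlinarith
  by_contra hcneg
  push_neg at hcneg
  rcases eq_or_lt_of_le hMnn with hM0 | hMpos
  · have := key 1 one_pos le_rfl
    rw [← hM0] at this; linarith
  · have ht0 : 0 < min 1 (-c / (2 * M)) := by
      apply lt_min one_pos
      apply div_pos (by linarith) (by linarith)
    have ht1 : min 1 (-c / (2 * M)) ≤ 1 := min_le_left _ _
    have := key _ ht0 ht1
    have h5 : min 1 (-c / (2 * M)) * M ≤ (-c / (2 * M)) * M :=
      mul_le_mul_of_nonneg_right (min_le_right _ _) hMnn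
    have h6 : (-c / (2 * M)) * M = -c / 2 := by field_simp
    linarith

lemma single_mem_simplex {n : ℕ} (i : Fin n) :
    EuclideanSpace.single i (1:ℝ) ∈ unitSimplex n := by
  constructor
  · intro j
    rw [EuclideanSpace.single_apply]
    split <;> norm_num
  · simp [EuclideanSpace.single_apply]

lemma mu_le_L {n : ℕ} (hn : 2 ≤ n) {L μ : ℝ} {f : Euc n → ℝ} {g : Euc n → Euc n}
    (hsmooth : ∀ a ∈ unitSimplex n, ∀ b ∈ unitSimplex n,
      f b ≤ f a + ⟪g a, b - a⟫_ℝ + L / 2 * ‖a - b‖ ^ 2)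
    (hstrong : ∀ a ∈ unitSimplex n, ∀ b ∈ unitSimplex n,
      f a + ⟪g a, b - a⟫_ℝ + μ / 2 * ‖a - b‖ ^ 2 ≤ f b) : μ ≤ L := by
  set a := EuclideanSpace.single (⟨0, by omega⟩ : Fin n) (1:ℝ)
  set b := EuclideanSpace.single (⟨1, by omega⟩ : Fin n) (1:ℝ)
  have ha := single_mem_simplex (⟨0, by omega⟩ : Fin n)
  have hb := single_mem_simplex (⟨1, by omega⟩ : Fin n)
  have hne : a ≠ b := by
    intro h
    have := congrArg (fun v : Euc n => v (⟨0, by omega⟩ : Fin n)) h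
    simp [a, b, EuclideanSpace.single_apply] at this
  have hpos : 0 < ‖a - b‖ ^ 2 := by
    have : a - b ≠ 0 := sub_ne_zero.mpr hne
    have := norm_pos_iff.mpr this
    positivity
  have h1 := hsmooth a ha b hb
  have h2 := hstrong a ha b hb
  nlinarith

theorem sfw_linear_convergence (n : ℕ) (hn : 0 < n) (L μ : ℝ) (hL : 0 < L) (hμ : 0 < μ)
    (f : Euc n → ℝ) (g : Euc n → Euc n)
    (hgrad : ∀ a ∈ unitSimplex n, HasGradientAt f (g a) a)
    (hsmooth : ∀ a ∈ unitSimplex n, ∀ b ∈ unitSimplex n,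
      f b ≤ f a + ⟪g a, b - a⟫_ℝ + L / 2 * ‖a - b‖ ^ 2)
    (hstrong : ∀ a ∈ unitSimplex n, ∀ b ∈ unitSimplex n,
      f a + ⟪g a, b - a⟫_ℝ + μ / 2 * ‖a - b‖ ^ 2 ≤ f b)
    (xstar : Euc n) (hxs : xstar ∈ unitSimplex n) (hmin : ∀ z ∈ unitSimplex n, f xstar ≤ f z)
    (x y : ℕ → Euc n) (B d : ℕ → ℝ)
    (hx0 : x 0 ∈ unitSimplex n) (hB0 : B 0 ≤ f xstar)
    (hd0 : d 0 = Real.sqrt (2 * (f (x 0) - B 0) / μ))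
    (hy : ∀ k : ℕ, y (k + 1) ∈ simplexBall n (x k) (d k) ∩ unitSimplex n ∧
      ∀ z ∈ simplexBall n (x k) (d k) ∩ unitSimplex n,
        ⟪g (x k), y (k + 1)⟫_ℝ ≤ ⟪g (x k), z⟫_ℝ)
    (hB : ∀ k : ℕ, B (k + 1) = max (B k) (f (x k) + ⟪g (x k), y (k + 1) - x k⟫_ℝ))
    (hxup : ∀ k : ℕ, x (k + 1) =
      (1 - μ / (2 * L * (n : ℝ) ^ 2)) • x k + (μ / (2 * L * (n : ℝ) ^ 2)) • y (k + 1))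
    (hd : ∀ k : ℕ, d (k + 1) = Real.sqrt (2 * (f (x (k + 1)) - B (k + 1)) / μ)) :
    ∀ k : ℕ, f (x k) - f xstar ≤ f (x k) - B k ∧
      f (x k) - B k ≤ μ * (d 0) ^ 2 / 2 * Real.exp (-(μ * k) / (4 * L * (n : ℝ) ^ 2)) := by
  have hdk : ∀ k : ℕ, d k = Real.sqrt (2 * (f (x k) - B k) / μ) := by
    intro k; cases k with
    | zero => exact hd0
    | succ m => exact hd m
  have hgap0nn : 0 ≤ f (x 0) - B 0 := by
    have := hmin (x 0) hx0; linarith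
  have hd0sq : μ * (d 0) ^ 2 / 2 = f (x 0) - B 0 := by
    rw [hd0, Real.sq_sqrt (by positivity)]
    field_simp
  rcases Nat.lt_or_ge n 2 with hn1 | hn2
  · -- n = 1 : the simplex is a single point
    have hn1' : n = 1 := by omega
    subst hn1'
    have hall : ∀ z, z ∈ unitSimplex 1 → z = ones 1 := by
      intro z hz
      ext i
      have hi : i = 0 := Subsingleton.elim _ _
      have := hz.2
      rw [Fin.sum_univ_one] at this
      rw [hi]
      simpa [ones] using this
    have hones : ones 1 ∈ unitSimplex 1 := by
      constructor
      · intro i; norm_num [ones]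
      · rw [Fin.sum_univ_one]; norm_num [ones]
    have hxall : ∀ k, x k ∈ unitSimplex 1 := by
      intro k
      induction k with
      | zero => exact hx0
      | succ m ih =>
        have hym := (hy m).1.2
        rw [hxup m, hall _ ih, hall _ hym]
        have : (1 - μ / (2 * L * ((1:ℕ):ℝ) ^ 2)) • ones 1 + (μ / (2 * L * ((1:ℕ):ℝ) ^ 2)) • ones 1
            = ones 1 := by
          ext i
          simp only [PiLp.add_apply, PiLp.smul_apply, smul_eq_mul, ones, PiLp.toLp_apply]
          ring
        rw [this]
        exact hones
    have hfx : ∀ k, f (x k) = f xstar := by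
      intro k
      rw [hall _ (hxall k), ← hall _ hxs]
    have hBle : ∀ k, B k ≤ f xstar := by
      intro k
      induction k with
      | zero => exact hB0
      | succ m ih =>
        rw [hB m]
        apply max_le ih
        have hy0 : y (m+1) - x m = 0 := by
          rw [hall _ (hy m).1.2, hall _ (hxall m), sub_self]
        rw [hy0, inner_zero_right, add_zero, hfx m]
    have hBeq : ∀ k, B (k+1) = f xstar := by
      intro k
      rw [hB k]
      have hy0 : y (k+1) - x k = 0 := by
        rw [hall _ (hy k).1.2, hall _ (hxall k), sub_self]
      rw [hy0, inner_zero_right, add_zero, hfx k]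
      exact max_eq_right (hBle k)
    intro k
    refine ⟨sub_le_sub_left (hBle k) _, ?_⟩
    cases k with
    | zero =>
      rw [hd0sq]
      norm_num
    | succ m =>
      rw [hfx (m+1), hBeq m, sub_self]
      positivity
  · -- n ≥ 2
    have hμL : μ ≤ L := mu_le_L hn2 hsmooth hstrong
    set δ := μ / (2 * L * (n:ℝ)^2) with hδdef
    have hnR : (1:ℝ) ≤ (n:ℝ) := by exact_mod_cast hn
    have hnsq : (1:ℝ) ≤ (n:ℝ)^2 := by nlinarith
    have hδpos : 0 < δ := by
      apply div_pos hμ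
      positivity
    have hδ1 : δ ≤ 1 := by
      rw [hδdef, div_le_one (by positivity)]
      nlinarith
    have hopt : ∀ z ∈ unitSimplex n, 0 ≤ ⟪g xstar, z - xstar⟫_ℝ := fun z hz =>
      first_order_opt hL hxs (fun b hb => hsmooth xstar hxs b hb) hmin hz
    have key : ∀ k : ℕ, x k ∈ unitSimplex n ∧ B k ≤ f xstar ∧
        f (x k) - B k ≤ (f (x 0) - B 0) * (1 - δ/2)^k := by
      intro k
      induction k with
      | zero => exact ⟨hx0, hB0, by simp⟩
      | succ k ih =>
        obtain ⟨hxk, hBk, hgap⟩ := ih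
        have hfstar_le : f xstar ≤ f (x k) := hmin _ hxk
        have hgapnn : 0 ≤ f (x k) - B k := by linarith
        have hdknn : 0 ≤ d k := by rw [hdk k]; exact Real.sqrt_nonneg _
        have hdk2 : (d k)^2 = 2 * (f (x k) - B k) / μ := by
          rw [hdk k]; exact Real.sq_sqrt (by positivity)
        -- xstar is in the simplex ball
        have hstrx := hstrong xstar hxs (x k) hxk
        have h0 := hopt (x k) hxk
        have hnormsq : ‖xstar - x k‖^2 ≤ (d k)^2 := by
          rw [hdk2]
          rw [le_div_iff₀ hμ]
          nlinarith
        have hnorm_le : ‖xstar - x k‖ ≤ d k := by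
          have := Real.sqrt_le_sqrt hnormsq
          rwa [Real.sqrt_sq (norm_nonneg _), Real.sqrt_sq hdknn] at this
        have hxs_ball : xstar ∈ simplexBall n (x k) (d k) := by
          apply mem_simplexBall hn hxk hxs hdknn
          intro i
          have h1 := abs_coord_le_norm (x k - xstar) i
          rw [PiLp.sub_apply] at h1
          have h2 := le_abs_self (x k i - xstar i)
          rw [norm_sub_rev] at h1
          linarith
        obtain ⟨⟨hyball, hymem⟩, hymin⟩ := hy k
        have hinner_star : ⟪g (x k), y (k+1)⟫_ℝ ≤ ⟪g (x k), xstar⟫_ℝ :=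
          hymin xstar ⟨hxs_ball, hxs⟩
        have hconv := hstrong (x k) hxk xstar hxs
        have hBw : f (x k) + ⟪g (x k), y (k+1) - x k⟫_ℝ ≤ f xstar := by
          have e1 : ⟪g (x k), y (k+1) - x k⟫_ℝ
              = ⟪g (x k), y (k+1)⟫_ℝ - ⟪g (x k), x k⟫_ℝ := inner_sub_right _ _ _
          have e2 : ⟪g (x k), xstar - x k⟫_ℝ
              = ⟪g (x k), xstar⟫_ℝ - ⟪g (x k), x k⟫_ℝ := inner_sub_right _ _ _
          have hnn : 0 ≤ μ/2 * ‖x k - xstar‖^2 := by positivity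
          linarith
        have hBk1 : B (k+1) ≤ f xstar := by
          rw [hB k]; exact max_le hBk hBw
        have hBmono : B k ≤ B (k+1) := by rw [hB k]; exact le_max_left _ _
        have hBwle : f (x k) + ⟪g (x k), y (k+1) - x k⟫_ℝ ≤ B (k+1) := by
          rw [hB k]; exact le_max_right _ _
        have hxk1 : x (k+1) ∈ unitSimplex n := by
          rw [hxup k]; exact simplex_comb (le_of_lt hδpos) hδ1 hxk hymem
        -- the descent step
        have hstep := hsmooth (x k) hxk (x (k+1)) hxk1
        have hxdiff : x (k+1) - x k = δ • (y (k+1) - x k) := by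
          rw [hxup k]; module
        have hinner2 : ⟪g (x k), x (k+1) - x k⟫_ℝ = δ * ⟪g (x k), y (k+1) - x k⟫_ℝ := by
          rw [hxdiff, real_inner_smul_right]
        have hnormstep : ‖x k - x (k+1)‖^2 = δ^2 * ‖x k - y (k+1)‖^2 := by
          have hh : x k - x (k+1) = -(δ • (y (k+1) - x k)) := by rw [← hxdiff]; abel
          rw [hh, norm_neg, norm_smul, Real.norm_eq_abs, mul_pow, sq_abs, norm_sub_rev]
        have hballbound := ball_norm_bound hn hyball
        have hterm : L/2 * (δ^2 * ((n:ℝ)^2 * (d k)^2)) = δ/2 * (f (x k) - B k) := by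
          rw [hdk2, hδdef]
          field_simp
        have hfk1 : f (x (k+1)) ≤ f (x k) + δ * ⟪g (x k), y (k+1) - x k⟫_ℝ
            + δ/2 * (f (x k) - B k) := by
          rw [hinner2, hnormstep] at hstep
          have hmul : L/2 * (δ^2 * ‖x k - y (k+1)‖^2) ≤ L/2 * (δ^2 * ((n:ℝ)^2 * (d k)^2)) := by
            apply mul_le_mul_of_nonneg_left _ (by positivity : (0:ℝ) ≤ L/2)
            exact mul_le_mul_of_nonneg_left hballbound (by positivity)
          linarith [hterm]
        have hδI : δ * ⟪g (x k), y (k+1) - x k⟫_ℝ ≤ δ * (B (k+1) - f (x k)) :=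
          mul_le_mul_of_nonneg_left (by linarith) (le_of_lt hδpos)
        have h1δ : 0 ≤ 1 - δ := by linarith
        have hint1 : (1 - δ) * B k ≤ (1 - δ) * B (k+1) :=
          mul_le_mul_of_nonneg_left hBmono h1δ
        have hgap1 : f (x (k+1)) - B (k+1) ≤ (1 - δ/2) * (f (x k) - B k) := by
          linarith [hfk1, hδI, hint1]
        refine ⟨hxk1, hBk1, ?_⟩
        calc f (x (k+1)) - B (k+1) ≤ (1 - δ/2) * (f (x k) - B k) := hgap1
          _ ≤ (1 - δ/2) * ((f (x 0) - B 0) * (1 - δ/2)^k) :=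
            mul_le_mul_of_nonneg_left hgap (by linarith)
          _ = (f (x 0) - B 0) * (1 - δ/2)^(k+1) := by ring
    intro k
    obtain ⟨hxk, hBk, hgap⟩ := key k
    refine ⟨sub_le_sub_left hBk _, ?_⟩
    have hexp1 : 1 - δ/2 ≤ Real.exp (-(δ/2)) := by
      have := Real.add_one_le_exp (-(δ/2)); linarith
    have hpow : (1 - δ/2)^k ≤ Real.exp (-(δ/2))^k :=
      pow_le_pow_left₀ (by linarith) hexp1 k
    have hexpk : Real.exp (-(δ/2))^k = Real.exp (-(μ * k) / (4 * L * (n:ℝ)^2)) := by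
      rw [← Real.exp_nat_mul]
      congr 1
      rw [hδdef]
      field_simp
      ring
    calc f (x k) - B k ≤ (f (x 0) - B 0) * (1 - δ/2)^k := hgap
      _ ≤ (f (x 0) - B 0) * Real.exp (-(δ/2))^k :=
        mul_le_mul_of_nonneg_left hpow hgap0nn
      _ = μ * (d 0) ^ 2 / 2 * Real.exp (-(μ * k) / (4 * L * (n:ℝ)^2)) := by
        rw [hexpk, hd0sq]
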